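/- arXiv:2309.07859 — 2 statements merged into one kernel-verified Lean document; each statement's English description precedes it below -/
import Mathlib

section
/- Let f_1 = 1, f_2 = 13/42, f_3 = 1/6, f_4 = 2/21, f_5 = 1/21, f_6 = 1/84, and f_j = 0 for all j ≥ 7. Then for all integers i, j ≥ 1, i·(f_i − f_{i+1}) + (j−1)·(f_j − f_{j+1}) ≤ 5/6. -/
def f : ℕ → ℚ
  | 1 => 1
  | 2 => 13/42
  | 3 => 1/6
  | 4 => 2/21
  | 5 => 1/21
  | 6 => 1/84
  | _ => 0

lemma f_zero {n : ℕ} (hn : 7 ≤ n) : f n = 0 := by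
  obtain ⟨m, rfl⟩ : ∃ m, n = m + 7 := ⟨n - 7, by omega⟩
  rfl

lemma first_bound (i : ℕ) (hi : 1 ≤ i) :
    (i : ℚ) * (f i - f (i + 1)) ≤ 29 / 42 := by
  by_cases h : i ≤ 6
  · interval_cases i <;> norm_num [f]
  · rw [f_zero (by omega), f_zero (by omega)]
    norm_num

lemma second_bound (j : ℕ) (hj : 1 ≤ j) :
    ((j : ℚ) - 1) * (f j - f (j + 1)) ≤ 1 / 7 := by
  by_cases h : j ≤ 6
  · interval_cases j <;> norm_num [f]
  · rw [f_zero (by omega), f_zero (by omega)]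
    norm_num

theorem stmt_0 (i j : ℕ) (hi : 1 ≤ i) (hj : 1 ≤ j) :
    (i : ℚ) * (f i - f (i + 1)) + ((j : ℚ) - 1) * (f j - f (j + 1)) ≤ 5 / 6 := by
  have h1 := first_bound i hi
  have h2 := second_bound j hj
  linarith
end

section
/- Let f_1 = 1, f_2 = 13/42, f_3 = 1/6, f_4 = 2/21, f_5 = 1/21, f_6 = 1/84, and f_j = 0 for all j ≥ 7. Then for all integers i ≥ 1, 2(i−1)·f_i + f_{2i+1} ≤ 2/3. -/
theorem stmt_1 (i : ℕ) (hi : 1 ≤ i) :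
    2 * ((i : ℚ) - 1) * f i + f (2 * i + 1) ≤ 2 / 3 := by
  match i, hi with
  | 1, _ => norm_num [f]
  | 2, _ => norm_num [f]
  | 3, _ => norm_num [f]
  | 4, _ => norm_num [f]
  | 5, _ => norm_num [f]
  | 6, _ => norm_num [f]
  | (n+7), _ =>
    have h1 : f (n+7) = 0 := rfl
    have h2 : f (2*(n+7)+1) = 0 := rfl
    rw [h1, h2]
    norm_num
end
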